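/- If X is a strongly star-Lindelöf space and X is the union of fewer than 𝔟 many Menger subspaces, then X is strongly star-Menger. -/

import Mathlib

open Set Filter Topology

/-- `𝒰` is an open cover of the space `X`. -/
def IsOpenCover {X : Type} [TopologicalSpace X] (𝒰 : Set (Set X)) : Prop :=
  (∀ u ∈ 𝒰, IsOpen u) ∧ ⋃₀ 𝒰 = Set.univ

/-- The star of a set `A` with respect to a collection `𝒰`. -/
def st {X : Type} (A : Set X) (𝒰 : Set (Set X)) : Set X :=
  ⋃₀ {u ∈ 𝒰 | (u ∩ A).Nonempty}
/-- Eventual domination `f ≤* g`. -/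
def EvLE (f g : ℕ → ℕ) : Prop := ∀ᶠ n in Filter.atTop, f n ≤ g n

/-- The dominating number `𝔡`. -/
noncomputable def dominatingNumber : Cardinal :=
  sInf {c | ∃ D : Set (ℕ → ℕ),
    (∀ g : ℕ → ℕ, ∃ f ∈ D, EvLE g f) ∧ Cardinal.mk D = c}

/-- The bounding number `𝔟`. -/
noncomputable def boundingNumber : Cardinal :=
  sInf {c | ∃ B : Set (ℕ → ℕ),
    (¬ ∃ g : ℕ → ℕ, ∀ f ∈ B, EvLE f g) ∧ Cardinal.mk B = c}
/-- The Menger property `S_fin(𝒪,𝒪)`. -/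
def MengerSpace (X : Type) [TopologicalSpace X] : Prop :=
  ∀ 𝒰 : ℕ → Set (Set X), (∀ n, IsOpenCover (𝒰 n)) →
    ∃ 𝒱 : ℕ → Set (Set X), (∀ n, (𝒱 n).Finite ∧ 𝒱 n ⊆ 𝒰 n) ∧
      ∀ x : X, ∃ n, x ∈ ⋃₀ 𝒱 n

/-- The Hurewicz property. -/
def HurewiczSpace (X : Type) [TopologicalSpace X] : Prop :=
  ∀ 𝒰 : ℕ → Set (Set X), (∀ n, IsOpenCover (𝒰 n)) →
    ∃ 𝒱 : ℕ → Set (Set X), (∀ n, (𝒱 n).Finite ∧ 𝒱 n ⊆ 𝒰 n) ∧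
      ∀ x : X, ∀ᶠ n in Filter.atTop, x ∈ ⋃₀ 𝒱 n

/-- The star-Menger property. -/
def StarMengerSpace (X : Type) [TopologicalSpace X] : Prop :=
  ∀ 𝒰 : ℕ → Set (Set X), (∀ n, IsOpenCover (𝒰 n)) →
    ∃ 𝒱 : ℕ → Set (Set X), (∀ n, (𝒱 n).Finite ∧ 𝒱 n ⊆ 𝒰 n) ∧
      ∀ x : X, ∃ n, x ∈ st (⋃₀ 𝒱 n) (𝒰 n)

/-- The star-Hurewicz property. -/
def StarHurewiczSpace (X : Type) [TopologicalSpace X] : Prop :=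
  ∀ 𝒰 : ℕ → Set (Set X), (∀ n, IsOpenCover (𝒰 n)) →
    ∃ 𝒱 : ℕ → Set (Set X), (∀ n, (𝒱 n).Finite ∧ 𝒱 n ⊆ 𝒰 n) ∧
      ∀ x : X, ∀ᶠ n in Filter.atTop, x ∈ st (⋃₀ 𝒱 n) (𝒰 n)

/-- The strongly star-Menger property. -/
def StronglyStarMengerSpace (X : Type) [TopologicalSpace X] : Prop :=
  ∀ 𝒰 : ℕ → Set (Set X), (∀ n, IsOpenCover (𝒰 n)) →
    ∃ F : ℕ → Set X, (∀ n, (F n).Finite) ∧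
      ∀ x : X, ∃ n, x ∈ st (F n) (𝒰 n)

/-- The strongly star-Hurewicz property. -/
def StronglyStarHurewiczSpace (X : Type) [TopologicalSpace X] : Prop :=
  ∀ 𝒰 : ℕ → Set (Set X), (∀ n, IsOpenCover (𝒰 n)) →
    ∃ F : ℕ → Set X, (∀ n, (F n).Finite) ∧
      ∀ x : X, ∀ᶠ n in Filter.atTop, x ∈ st (F n) (𝒰 n)

/-- The star-Lindelöf property. -/
def StarLindelofSpace (X : Type) [TopologicalSpace X] : Prop :=
  ∀ 𝒰 : Set (Set X), IsOpenCover 𝒰 →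
    ∃ 𝒱 ⊆ 𝒰, 𝒱.Countable ∧ st (⋃₀ 𝒱) 𝒰 = Set.univ

/-- The strongly star-Lindelöf property. -/
def StronglyStarLindelofSpace (X : Type) [TopologicalSpace X] : Prop :=
  ∀ 𝒰 : Set (Set X), IsOpenCover 𝒰 →
    ∃ C : Set X, C.Countable ∧ st C 𝒰 = Set.univ

theorem stmt (X : Type) [TopologicalSpace X] (hX : StronglyStarLindelofSpace X)
    (ι : Type) (Y : ι → Set X)
    (hcard : Cardinal.mk ι < boundingNumber)
    (hY : ∀ i, MengerSpace (Y i))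
    (hcover : ⋃ i, Y i = Set.univ) :
    StronglyStarMengerSpace X := by
  intro 𝒰 h𝒰
  rcases isEmpty_or_nonempty X with hE | hNE
  · exact ⟨fun _ => ∅, fun _ => Set.finite_empty, fun x => (hE.false x).elim⟩
  classical
  choose C hCc hCst using fun n => hX (𝒰 n) (h𝒰 n)
  have hCne : ∀ n, (C n).Nonempty := by
    intro n
    obtain ⟨x⟩ := hNE
    have hx : x ∈ st (C n) (𝒰 n) := by rw [hCst n]; trivial
    obtain ⟨u, hu, hxu⟩ := hx
    exact ⟨(hu.2).choose, (hu.2).choose_spec.2⟩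
  choose c hc using fun n => (hCc n).exists_eq_range (hCne n)
  set W : ℕ → ℕ → Set X := fun n k => st (c n '' Set.Iic k) (𝒰 n) with hW
  have stmono : ∀ (A B : Set X) (𝒲 : Set (Set X)), A ⊆ B → st A 𝒲 ⊆ st B 𝒲 := by
    intro A B 𝒲 hAB x hx
    obtain ⟨u, ⟨hu1, hu2⟩, hxu⟩ := hx
    exact ⟨u, ⟨hu1, hu2.mono (Set.inter_subset_inter_right u hAB)⟩, hxu⟩
  have Wmono : ∀ n, Monotone (W n) := by
    intro n k k' hkk'
    exact stmono _ _ _ (Set.image_mono (Set.Iic_subset_Iic.mpr hkk'))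
  have Wopen : ∀ n k, IsOpen (W n k) := by
    intro n k
    exact isOpen_sUnion (fun u hu => (h𝒰 n).1 u hu.1)
  have Wcov : ∀ n (x : X), ∃ k, x ∈ W n k := by
    intro n x
    have hx : x ∈ st (C n) (𝒰 n) := by rw [hCst n]; trivial
    obtain ⟨u, ⟨hu1, y, hyu, hyC⟩, hxu⟩ := hx
    rw [hc n] at hyC
    obtain ⟨t, ht⟩ := hyC
    exact ⟨t, u, ⟨hu1, y, hyu, ⟨t, le_refl t, ht⟩⟩, hxu⟩
  have key : ∀ i, ∃ f : ℕ → ℕ, ∀ y ∈ Y i, ∀ j, ∃ m, j ≤ m ∧ y ∈ W m (f m) := by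
    intro i
    have hj : ∀ j : ℕ, ∃ h : ℕ → ℕ, ∀ y : (Y i), ∃ n, (y : X) ∈ W (j + n) (h n) := by
      intro j
      set F : ℕ → ℕ → Set (Y i) := fun n k => (Subtype.val) ⁻¹' (W (j + n) k) with hF
      have hcov : ∀ n, IsOpenCover (Set.range (F n)) := by
        intro n
        constructor
        · rintro u ⟨k, rfl⟩
          exact (Wopen _ _).preimage continuous_subtype_val
        · ext y
          simp only [Set.mem_sUnion, Set.mem_range, Set.mem_univ, iff_true]
          obtain ⟨k, hk⟩ := Wcov (j + n) (y : X)
          exact ⟨F n k, ⟨k, rfl⟩, hk⟩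
      obtain ⟨𝒱, h𝒱, hcover𝒱⟩ := hY i (fun n => Set.range (F n)) hcov
      have hKn : ∀ n, ∃ K, ⋃₀ 𝒱 n ⊆ F n K := by
        intro n
        set idx : Set (Y i) → ℕ :=
          fun v => if h : v ∈ Set.range (F n) then h.choose else 0 with hidx
        have hidxs : ∀ v ∈ 𝒱 n, F n (idx v) = v := by
          intro v hv
          have hv' : v ∈ Set.range (F n) := (h𝒱 n).2 hv
          simp only [hidx, dif_pos hv']
          exact hv'.choose_spec
        have hfin : (idx '' 𝒱 n).Finite := (h𝒱 n).1.image _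
        obtain ⟨K, hK⟩ := hfin.bddAbove
        refine ⟨K, ?_⟩
        rintro y ⟨v, hv, hyv⟩
        have h1 : idx v ≤ K := hK ⟨v, hv, rfl⟩
        have h2 : F n (idx v) ⊆ F n K := Set.preimage_mono (Wmono _ h1)
        rw [← hidxs v hv] at hyv
        exact h2 hyv
      choose K hKs using hKn
      refine ⟨K, fun y => ?_⟩
      obtain ⟨n, hn⟩ := hcover𝒱 y
      exact ⟨n, hKs n hn⟩
    choose h hh using hj
    refine ⟨fun m => Finset.sup (Finset.range (m + 1)) (fun j => h j (m - j)), ?_⟩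
    intro y hy j
    obtain ⟨n, hn⟩ := hh j ⟨y, hy⟩
    refine ⟨j + n, Nat.le_add_right j n, ?_⟩
    have h1 : h j n ≤ Finset.sup (Finset.range (j + n + 1)) (fun t => h t (j + n - t)) := by
      have heq : h j n = h j (j + n - j) := by rw [Nat.add_sub_cancel_left]
      rw [heq]
      exact Finset.le_sup (f := fun t => h t (j + n - t))
        (Finset.mem_range.mpr (Nat.lt_succ_of_le (Nat.le_add_right j n)))
    exact Wmono _ h1 hn
  choose f hf using key
  have hbdd : ∃ g : ℕ → ℕ, ∀ i, EvLE (f i) g := by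
    by_contra hcon
    push_neg at hcon
    have hmem : Cardinal.mk (Set.range f) ∈ {c | ∃ B : Set (ℕ → ℕ),
        (¬ ∃ g : ℕ → ℕ, ∀ f ∈ B, EvLE f g) ∧ Cardinal.mk B = c} := by
      refine ⟨Set.range f, ?_, rfl⟩
      rintro ⟨g, hg⟩
      obtain ⟨i, hi⟩ := hcon g
      exact hi (hg (f i) ⟨i, rfl⟩)
    have h1 : boundingNumber ≤ Cardinal.mk (Set.range f) := csInf_le' hmem
    exact absurd (h1.trans Cardinal.mk_range_le) (not_le.mpr hcard)
  obtain ⟨g, hg⟩ := hbdd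
  refine ⟨fun m => c m '' Set.Iic (g m), fun m => (Set.finite_Iic _).image _, ?_⟩
  intro x
  have hx : x ∈ ⋃ i, Y i := by rw [hcover]; trivial
  obtain ⟨i, hi⟩ := Set.mem_iUnion.mp hx
  obtain ⟨N, hN⟩ := Filter.eventually_atTop.mp (hg i)
  obtain ⟨m, hm, hxm⟩ := hf i x hi N
  exact ⟨m, Wmono m (hN m hm) hxm⟩
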